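/- Every base-b palindrome with an even number of digits is a b-wARH number. -/

import Mathlib

/-- Sum of the base-`b` digits of `N`. -/
def sumDigits (b N : ℕ) : ℕ := (Nat.digits b N).sum

/-- The base-`b` reversal of `N`. -/
def revDigits (b N : ℕ) : ℕ := Nat.ofDigits b (Nat.digits b N).reverse

/-- `N` is a `b`-wARH number. -/
def IsWARH (b N : ℕ) : Prop :=
  ∃ A : ℕ, N = (A + sumDigits b N) + revDigits b (A + sumDigits b N)

lemma ofDigits_replicate_zero (b k : ℕ) : Nat.ofDigits b (List.replicate k 0) = 0 := by
  induction k with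
  | zero => simp [Nat.ofDigits]
  | succ n ih => simp [List.replicate_succ, Nat.ofDigits, ih]

theorem even_palindrome_isWARH (b N : ℕ) (hb : 2 ≤ b) (hN : 0 < N)
    (hpal : (Nat.digits b N).Palindrome)
    (heven : Even (Nat.digits b N).length) :
    IsWARH b N := by
  set D := Nat.digits b N with hD
  obtain ⟨k, hk⟩ := heven
  have hDne : D ≠ [] := Nat.digits_ne_nil_iff_ne_zero.mpr hN.ne'
  have hrev : D.reverse = D := hpal.reverse_eq
  have hk1 : 1 ≤ k := by
    rcases Nat.eq_zero_or_pos k with h | h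
    · exfalso; apply hDne; rw [← List.length_eq_zero_iff]; omega
    · exact h
  set T := D.drop k with hT
  have hTlen : T.length = k := by simp [hT, hk]
  have hTne : T ≠ [] := by
    intro h; rw [h] at hTlen; simp at hTlen; omega
  have htake : D.take k = T.reverse := by
    have := @List.reverse_take ℕ D k
    rw [hrev] at this
    have h2 : D.length - k = k := by omega
    rw [h2] at this
    rw [← hT] at this
    rw [← this, List.reverse_reverse]
  set L := List.replicate k 0 ++ T with hL
  set M := Nat.ofDigits b L with hM
  -- digits of M is L
  have hLne : L ≠ [] := by simp [hL, hTne]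
  have hdigM : Nat.digits b M = L := by
    apply Nat.digits_ofDigits b hb
    · intro l hl
      rw [hL, List.mem_append] at hl
      rcases hl with h | h
      · have := List.eq_of_mem_replicate h; omega
      · exact Nat.digits_lt_base hb (List.mem_of_mem_drop h)
    · intro h
      have hLT : L.getLast h = T.getLast hTne := List.getLast_append_right hTne
      rw [hLT]
      have hDsplit : D.take k ++ T = D := List.take_append_drop k D
      have hopt : D.getLast? = T.getLast? := by
        conv_lhs => rw [← hDsplit]
        rw [List.getLast?_append, List.getLast?_eq_getLast hTne]
        simp
      have : D.getLast hDne = T.getLast hTne := by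
        have h1 := List.getLast?_eq_getLast hDne
        have h2 := List.getLast?_eq_getLast hTne
        rw [h1, h2] at hopt
        exact Option.some.inj hopt
      rw [← this]
      exact Nat.getLast_digit_ne_zero b hN.ne'
  -- value computations
  have hMval : M = b ^ k * Nat.ofDigits b T := by
    rw [hM, hL, Nat.ofDigits_append, ofDigits_replicate_zero, List.length_replicate]
    ring
  have hrevM : revDigits b M = Nat.ofDigits b T.reverse := by
    rw [revDigits, hdigM, hL, List.reverse_append, List.reverse_replicate,
      Nat.ofDigits_append]
    simp [ofDigits_replicate_zero]
  have hNval : N = M + revDigits b M := by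
    have : Nat.ofDigits b D = N := Nat.ofDigits_digits b N
    rw [← this]
    conv_lhs => rw [← List.take_append_drop k D]
    rw [Nat.ofDigits_append, ← hT, htake, List.length_reverse, hTlen, hrevM, hMval]
    ring
  -- digit sum bound
  have hsum : sumDigits b N = 2 * T.sum := by
    rw [sumDigits, ← hD]
    conv_lhs => rw [← List.take_append_drop k D]
    rw [List.sum_append, ← hT, htake, List.sum_reverse]
    ring
  have hMge : sumDigits b N ≤ M := by
    rw [hsum, hMval]
    have h1 : T.sum ≤ Nat.ofDigits b T := Nat.sum_le_ofDigits T (by omega)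
    have h2 : 2 ≤ b ^ k := by
      calc 2 = 2 ^ 1 := by norm_num
      _ ≤ b ^ k := Nat.pow_le_pow_left hb k |>.trans' (Nat.pow_le_pow_right (by norm_num) hk1)
    exact Nat.mul_le_mul h2 h1
  refine ⟨M - sumDigits b N, ?_⟩
  rw [Nat.sub_add_cancel hMge]
  exact hNval
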